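/- Let n ≥ 2 be even and let A be any n×n real matrix. Then Σ_{σ,γ ∈ S_n} sgn(σ) sgn(γ) · ( Π_{t=1}^n A_{σ(t) γ(t)} ) · ( Π_{t=1}^n A_{σ(t) γ(t+1)} ) = 0, where in the second product γ(t+1) is read cyclically, so the factor for t = n is A_{σ(n) γ(1)}. -/

import Mathlib

open Finset

/-- For even `n ≥ 2` and any real `n × n` matrix `A`,
`∑ σ γ, sgn σ * sgn γ * (∏ t, A (σ t) (γ t)) * (∏ t, A (σ t) (γ (t+1))) = 0`,
where `t + 1` is read cyclically in `Fin n` (so the factor for the last `t` is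
`A (σ (n-1)) (γ 0)`). -/
theorem even_n_cancellation
    (n : ℕ) (hn : 2 ≤ n) (heven : Even n) (A : Matrix (Fin n) (Fin n) ℝ) :
    ∑ σ : Equiv.Perm (Fin n), ∑ γ : Equiv.Perm (Fin n),
      ((Equiv.Perm.sign σ : ℤ) : ℝ) * ((Equiv.Perm.sign γ : ℤ) : ℝ) *
        (∏ t : Fin n, A (σ t) (γ t)) *
        (∏ t : Fin n, A (σ t) (γ (t + ⟨1, by omega⟩))) = 0 := by
  haveI : NeZero n := ⟨by omega⟩
  have h1 : (⟨1, by omega⟩ : Fin n) = 1 := by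
    ext
    simp [Fin.val_one', Nat.mod_eq_of_lt (by omega : 1 < n)]
  simp only [h1]
  set ρ : Equiv.Perm (Fin n) := Equiv.neg (Fin n) with hρ
  set τ : Equiv.Perm (Fin n) := Equiv.subLeft 1 with hτ
  set c : Equiv.Perm (Fin n) := Equiv.addLeft 1 with hc
  have hρ_app : ∀ x : Fin n, ρ x = -x := fun x => rfl
  have hτ_app : ∀ x : Fin n, τ x = 1 - x := fun x => rfl
  have hsc : Equiv.Perm.sign c = -1 := by
    obtain ⟨m, rfl⟩ : ∃ m, n = m + 1 := ⟨n - 1, by omega⟩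
    have hcrot : c = finRotate (m + 1) := by
      ext x
      simp [hc, finRotate_succ_apply, add_comm]
    have hm : Odd m := by
      rcases heven with ⟨k, hk⟩; exact ⟨k - 1, by omega⟩
    rw [hcrot, sign_finRotate, Nat.add_sub_cancel, Odd.neg_one_pow hm]
  have hτc : τ = c * ρ := by
    ext x
    simp [hτ_app, hρ_app, hc, sub_eq_add_neg]
  have hsign : Equiv.Perm.sign ρ * Equiv.Perm.sign τ = -1 := by
    rw [hτc, Equiv.Perm.sign_mul]
    have : Equiv.Perm.sign ρ * Equiv.Perm.sign ρ = 1 := Int.units_mul_self _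
    rw [mul_comm (Equiv.Perm.sign c), ← mul_assoc, this, one_mul, hsc]
  set f : Equiv.Perm (Fin n) → Equiv.Perm (Fin n) → ℝ := fun σ γ =>
    ((Equiv.Perm.sign σ : ℤ) : ℝ) * ((Equiv.Perm.sign γ : ℤ) : ℝ) *
      (∏ t : Fin n, A (σ t) (γ t)) * (∏ t : Fin n, A (σ t) (γ (t + 1))) with hf
  have key : ∀ σ γ : Equiv.Perm (Fin n), f (σ * ρ) (γ * τ) = - f σ γ := by
    intro σ γ
    have hP1 : (∏ t : Fin n, A ((σ * ρ) t) ((γ * τ) t)) =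
        ∏ t : Fin n, A (σ t) (γ (t + 1)) := by
      refine Fintype.prod_equiv (Equiv.neg (Fin n))
        (fun t => A ((σ * ρ) t) ((γ * τ) t)) (fun t => A (σ t) (γ (t + 1))) ?_
      intro t
      simp only [Equiv.Perm.mul_apply, hρ_app, hτ_app, Equiv.neg_apply]
      rw [show (1 - t : Fin n) = -t + 1 from by abel]
    have hP2 : (∏ t : Fin n, A ((σ * ρ) t) ((γ * τ) (t + 1))) =
        ∏ t : Fin n, A (σ t) (γ t) := by
      refine Fintype.prod_equiv (Equiv.neg (Fin n))
        (fun t => A ((σ * ρ) t) ((γ * τ) (t + 1))) (fun t => A (σ t) (γ t)) ?_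
      intro t
      simp only [Equiv.Perm.mul_apply, hρ_app, hτ_app, Equiv.neg_apply]
      rw [show (1 - (t + 1) : Fin n) = -t from by abel]
    have hs1 : ((Equiv.Perm.sign (σ * ρ) : ℤ) : ℝ) * ((Equiv.Perm.sign (γ * τ) : ℤ) : ℝ) =
        - (((Equiv.Perm.sign σ : ℤ) : ℝ) * ((Equiv.Perm.sign γ : ℤ) : ℝ)) := by
      rw [Equiv.Perm.sign_mul, Equiv.Perm.sign_mul]
      have : (Equiv.Perm.sign σ * Equiv.Perm.sign ρ) * (Equiv.Perm.sign γ * Equiv.Perm.sign τ)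
          = - (Equiv.Perm.sign σ * Equiv.Perm.sign γ) := by
        have h := hsign
        calc (Equiv.Perm.sign σ * Equiv.Perm.sign ρ) * (Equiv.Perm.sign γ * Equiv.Perm.sign τ)
            = (Equiv.Perm.sign σ * Equiv.Perm.sign γ) * (Equiv.Perm.sign ρ * Equiv.Perm.sign τ) :=
              mul_mul_mul_comm _ _ _ _
          _ = - (Equiv.Perm.sign σ * Equiv.Perm.sign γ) := by rw [h, mul_neg_one]
      have h2 := congrArg (fun u : ℤˣ => ((u : ℤ) : ℝ)) this
      push_cast at h2 ⊢
      linarith [h2]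
    simp only [hf]
    rw [hP1, hP2]
    rw [show (((Equiv.Perm.sign (σ * ρ) : ℤ) : ℝ)) * ((Equiv.Perm.sign (γ * τ) : ℤ) : ℝ) *
        (∏ t : Fin n, A (σ t) (γ (t + 1))) * (∏ t : Fin n, A (σ t) (γ t)) =
        (((Equiv.Perm.sign (σ * ρ) : ℤ) : ℝ) * ((Equiv.Perm.sign (γ * τ) : ℤ) : ℝ)) *
        ((∏ t : Fin n, A (σ t) (γ t)) * (∏ t : Fin n, A (σ t) (γ (t + 1)))) from by ring]
    rw [hs1]
    ring
  have hre : (∑ σ : Equiv.Perm (Fin n), ∑ γ : Equiv.Perm (Fin n), f σ γ) =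
      ∑ σ : Equiv.Perm (Fin n), ∑ γ : Equiv.Perm (Fin n), f (σ * ρ) (γ * τ) := by
    rw [← Equiv.sum_comp (Equiv.mulRight ρ) (fun σ => ∑ γ : Equiv.Perm (Fin n), f σ γ)]
    refine Finset.sum_congr rfl fun σ _ => ?_
    rw [← Equiv.sum_comp (Equiv.mulRight τ) (fun γ => f (Equiv.mulRight ρ σ) γ)]
    rfl
  have : (∑ σ : Equiv.Perm (Fin n), ∑ γ : Equiv.Perm (Fin n), f σ γ) =
      - ∑ σ : Equiv.Perm (Fin n), ∑ γ : Equiv.Perm (Fin n), f σ γ := by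
    nth_rewrite 1 [hre]
    simp only [key, Finset.sum_neg_distrib]
  linarith [this]
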